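/- For every n ≥ 1, the integer 16 divides φ(16n² + 1), where φ is Euler's totient function. -/

import Mathlib

/-- If `x ^ 2 = 0` in a commutative ring, then `(1 + x) ^ k = 1 + k * x`. -/
lemma aux_one_add_pow {R : Type*} [CommRing R] (x : R) (hx : x ^ 2 = 0) (k : ℕ) :
    (1 + x) ^ k = 1 + (k : R) * x := by
  induction k with
  | zero => simp
  | succ k ih =>
    rw [pow_succ, ih]
    have : (1 + (k : R) * x) * (1 + x) = 1 + ((k : R) + 1) * x + (k : R) * x ^ 2 := by ring
    rw [this, hx]
    push_cast
    ring

/-- For every n ≥ 1, 16 divides φ(16 n² + 1). -/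
theorem stmt_1 (n : ℕ) (hn : 1 ≤ n) : 16 ∣ Nat.totient (16 * n ^ 2 + 1) := by
  set N := 16 * n ^ 2 + 1 with hNdef
  have hn2 : 1 ≤ n ^ 2 := Nat.one_le_pow _ _ hn
  have hN1 : N % 16 = 1 := by omega
  have hNne1 : N ≠ 1 := by omega
  have hNpos : 0 < N := by omega
  have hNodd : N % 2 = 1 := by omega
  -- Step A: every prime divisor of N is ≡ 1 mod 4
  have hp4 : ∀ p : ℕ, p.Prime → p ∣ N → p % 4 = 1 := by
    intro p hp hpd
    have hpne2 : p ≠ 2 := by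
      rintro rfl
      obtain ⟨c, hc⟩ := hpd
      omega
    haveI : Fact p.Prime := ⟨hp⟩
    have hsq : IsSquare (-1 : ZMod p) := by
      refine ⟨((4 * n : ℕ) : ZMod p), ?_⟩
      have h0 : ((N : ℕ) : ZMod p) = 0 := (ZMod.natCast_eq_zero_iff _ _).mpr hpd
      rw [hNdef] at h0
      push_cast at h0 ⊢
      linear_combination -h0
    have h3 : p % 4 ≠ 3 := ZMod.exists_sq_eq_neg_one_iff.mp hsq
    rcases hp.eq_two_or_odd with h | h
    · exact absurd h hpne2
    · omega
  set p := N.minFac with hpdef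
  have hp : p.Prime := Nat.minFac_prime hNne1
  have hpdvd : p ∣ N := Nat.minFac_dvd N
  set k := N.factorization p with hkdef
  have hk1 : 1 ≤ k := hp.factorization_pos_of_dvd hNpos.ne' hpdvd
  set m := N / p ^ k with hmdef
  have hNm : p ^ k * m = N := Nat.ordProj_mul_ordCompl_eq_self N p
  have hcop : Nat.Coprime (p ^ k) m :=
    Nat.Coprime.pow_left _ (Nat.coprime_ordCompl hp hNpos.ne')
  have htot : N.totient = (p ^ k).totient * m.totient := by
    rw [← hNm, Nat.totient_mul hcop]
  have htpk : (p ^ k).totient = p ^ (k - 1) * (p - 1) := Nat.totient_prime_pow hp hk1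
  have h4p : 4 ∣ p - 1 := by
    have h1 := hp4 p hp hpdvd
    have h2 := hp.two_le
    omega
  by_cases hm1 : m = 1
  · -- N is a prime power p ^ k
    have hNpk : N = p ^ k := by rw [← hNm, hm1, mul_one]
    -- k is odd, otherwise N would be a perfect square
    have hkodd : k % 2 = 1 := by
      rcases Nat.even_or_odd k with he | ho
      · exfalso
        obtain ⟨j, hj⟩ := he
        set a := p ^ j with hadef
        have ha : a ^ 2 = 16 * n ^ 2 + 1 := by
          rw [hadef, ← pow_mul, ← hNdef, hNpk, hj]
          ring_nf
        have h1 : 4 * n < a := by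
          by_contra h
          push_neg at h
          have h2 := Nat.mul_le_mul h h
          nlinarith
        have h3 : (4 * n + 1) ^ 2 ≤ a ^ 2 := Nat.pow_le_pow_left h1 2
        nlinarith
      · exact Nat.odd_iff.mp ho
    -- 16 ∣ p - 1
    obtain ⟨M, hM⟩ := h4p
    have hp2 := hp.two_le
    have hpM : p = 4 * M + 1 := by omega
    have hx : ((4 * M : ℕ) : ZMod 16) ^ 2 = 0 := by
      have : (((4 * M) ^ 2 : ℕ) : ZMod 16) = 0 := by
        rw [ZMod.natCast_eq_zero_iff]
        exact ⟨M ^ 2, by ring⟩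
      push_cast at this
      exact_mod_cast this
    have hcastN : ((N : ℕ) : ZMod 16) = 1 := by
      conv_lhs => rw [← Nat.mod_add_div N 16, hN1]
      push_cast
      have h0 : (16 : ZMod 16) = 0 := by decide
      rw [h0, zero_mul, add_zero]
    have hcastp : ((p : ℕ) : ZMod 16) = 1 + ((4 * M : ℕ) : ZMod 16) := by
      rw [hpM]; push_cast; ring
    have hkey : ((k * (4 * M) : ℕ) : ZMod 16) = 0 := by
      have h5 : ((N : ℕ) : ZMod 16) = 1 + (k : ZMod 16) * ((4 * M : ℕ) : ZMod 16) := by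
        rw [hNpk, Nat.cast_pow, hcastp]
        exact aux_one_add_pow _ hx k
      rw [hcastN] at h5
      push_cast
      push_cast at h5
      linear_combination -h5
    have h16 : (16 : ℕ) ∣ k * (4 * M) := by
      rwa [ZMod.natCast_eq_zero_iff] at hkey
    have h4Mk : 4 ∣ M * k := by
      have h16' : (16 : ℕ) ∣ 4 * (M * k) := by
        rw [show 4 * (M * k) = k * (4 * M) by ring]
        exact h16
      omega
    have hck : Nat.Coprime 4 k := by
      have h2k : Nat.Coprime 2 k :=
        (Nat.prime_two.coprime_iff_not_dvd).mpr (by omega)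
      have : (4 : ℕ) = 2 ^ 2 := rfl
      rw [this]
      exact h2k.pow_left _
    have h4M : 4 ∣ M := hck.dvd_of_dvd_mul_right h4Mk
    have h16p : 16 ∣ p - 1 := by omega
    rw [htot, hm1, Nat.totient_one, mul_one, htpk]
    exact Dvd.dvd.mul_left h16p _
  · -- N has at least two distinct prime power factors
    have hmpos : 0 < m := by
      rcases Nat.eq_zero_or_pos m with h | h
      · rw [h, mul_zero] at hNm; omega
      · exact h
    set q := m.minFac with hqdef
    have hq : q.Prime := Nat.minFac_prime hm1
    have hqm : q ∣ m := Nat.minFac_dvd m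
    have hqN : q ∣ N := hqm.trans (Dvd.intro_left _ hNm)
    have h4q : 4 ∣ q - 1 := by
      have h1 := hp4 q hq hqN
      have h2 := hq.two_le
      omega
    have h4tm : 4 ∣ m.totient := by
      have h1 : q.totient ∣ m.totient := Nat.totient_dvd_of_dvd hqm
      rw [Nat.totient_prime hq] at h1
      exact h4q.trans h1
    have h4tp : 4 ∣ (p ^ k).totient := by
      rw [htpk]
      exact Dvd.dvd.mul_left h4p _
    obtain ⟨a, ha⟩ := h4tp
    obtain ⟨b, hb⟩ := h4tm
    rw [htot, ha, hb]
    exact ⟨a * b, by ring⟩
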